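/- For every bound N ∈ ℕ there exists a computable predictor that learns to predict every binary sequence computed by a partial recursive code of encoding at most N: for every N there is a computable p : List Bool → Bool such that for every ω : ℕ → Bool, if there exists a code c : Nat.Partrec.Code with Encodable.encode c ≤ N and with Encodable.encode (ω n) ∈ c.eval n for all n, then p learns to predict ω. -/

import Mathlib

/-- The length-`n` prefix `[ω 0, …, ω (n−1)]` of a binary sequence `ω`. -/
def prefixList (ω : ℕ → Bool) (n : ℕ) : List Bool := (List.range n).map ω

/-- A predictor `p` learns to predict the sequence `ω` if from some point on it
always predicts the next symbol correctly. -/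
def LearnsToPredict (p : List Bool → Bool) (ω : ℕ → Bool) : Prop :=
  ∃ m : ℕ, ∀ n ≥ m, p (prefixList ω n) = ω n

/-- A sequence computed by a code is computable. -/
lemma computable_of_code (ω : ℕ → Bool) (c : Nat.Partrec.Code)
    (h : ∀ n : ℕ, Encodable.encode (ω n) ∈ c.eval n) : Computable ω := by
  have hc : Nat.Partrec c.eval := Nat.Partrec.Code.exists_code.mpr ⟨c, rfl⟩
  have hp : Partrec c.eval := Partrec.nat_iff.mpr hc
  have hdec : Computable (fun k : ℕ => decide (k = 1)) :=
    (Primrec.eq.comp Primrec.id (Primrec.const 1)).decide.to_comp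
  have hm : Partrec (fun n => (c.eval n).map (fun k => decide (k = 1))) :=
    hp.map (hdec.comp Computable.snd).to₂
  apply hm.of_eq_tot
  intro n
  rw [Part.mem_map_iff]
  exact ⟨Encodable.encode (ω n), h n, by cases hω : ω n <;> simp [hω, Encodable.encode_true, Encodable.encode_false]⟩

lemma computable_prefixList {a : ℕ → Bool} (ha : Computable a) :
    Computable (fun n => prefixList a n) := by
  have step : Computable₂ (fun (_ : ℕ) (p : ℕ × List Bool) => p.2 ++ [a p.1]) :=
    Computable.list_concat.comp (Computable.snd.comp Computable.snd)
      (ha.comp (Computable.fst.comp Computable.snd))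
  have hrec := Computable.nat_rec Computable.id (Computable.const ([] : List Bool)) step
  apply hrec.of_eq
  intro n
  induction n with
  | zero => simp [prefixList]
  | succ k ih => simp [prefixList, List.range_succ] at *; simp [← ih]

lemma prefix_eq_iff {ω a : ℕ → Bool} {n : ℕ} (h : prefixList ω n = prefixList a n) :
    ∀ i < n, ω i = a i := by
  intro i hi
  have h1 : (prefixList ω n)[i]? = (prefixList a n)[i]? := by rw [h]
  simpa [prefixList, hi] using h1

/-- A computable predictor learning every member of a finite set of computable sequences. -/
lemma finite_predictor (T : Set (ℕ → Bool)) (hT : T.Finite)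
    (hcomp : ∀ ω ∈ T, Computable ω) :
    ∃ p : List Bool → Bool, Computable p ∧ ∀ ω ∈ T, LearnsToPredict p ω := by
  revert hcomp
  refine Set.Finite.induction_on (motive := fun T _ => (∀ ω ∈ T, Computable ω) →
      ∃ p : List Bool → Bool, Computable p ∧ ∀ ω ∈ T, LearnsToPredict p ω) T hT
    (fun _ => ⟨fun _ => false, Computable.const false, fun ω hω => absurd hω (by simp)⟩) ?_
  intro a s ha hs ih
  intro hcomp
  · obtain ⟨p, hp, hlearn⟩ := ih (fun ω hω => hcomp ω (Set.mem_insert_of_mem a hω))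
    have haC : Computable a := hcomp a (Set.mem_insert a s)
    refine ⟨fun l => if l = prefixList a l.length then a l.length else p l, ?_, ?_⟩
    · have hpre : Computable (fun l : List Bool => prefixList a l.length) :=
        (computable_prefixList haC).comp Computable.list_length
      have hb : Computable (fun l : List Bool => decide (l = prefixList a l.length)) :=
        ((Primrec.eq (α := List Bool)).decide.to_comp.comp Computable.id hpre).of_eq fun l => rfl
      have := Computable.cond hb (haC.comp Computable.list_length) hp
      exact this.of_eq fun l => by rw [Bool.cond_decide]
    · rintro ω (rfl | hω)
      · exact ⟨0, fun n _ => by simp [prefixList]⟩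
      · by_cases hwa : ω = a
        · subst hwa; exact ⟨0, fun n _ => by simp [prefixList]⟩
        · obtain ⟨m, hm⟩ := hlearn ω hω
          obtain ⟨n₀, hn₀⟩ : ∃ n₀, ω n₀ ≠ a n₀ := by
            by_contra h; push_neg at h; exact hwa (funext h)
          refine ⟨max m (n₀ + 1), fun n hn => ?_⟩
          have h1 : prefixList ω n ≠ prefixList a n := fun h =>
            hn₀ (prefix_eq_iff h n₀ (lt_of_lt_of_le (Nat.lt_succ_self n₀)
              (le_trans (le_max_right m (n₀+1)) hn)))
          have hlen : (prefixList ω n).length = n := by simp [prefixList]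
          simp only [hlen, h1, if_neg h1]
          exact hm n (le_trans (le_max_left _ _) hn)

/-- For every bound `N` there is a computable predictor learning to predict
every sequence computed by a partial recursive code of encoding at most `N`. -/
theorem stmt_9 :
    ∀ N : ℕ, ∃ p : List Bool → Bool, Computable p ∧
      ∀ ω : ℕ → Bool,
        (∃ c : Nat.Partrec.Code, Encodable.encode c ≤ N ∧
            ∀ n : ℕ, Encodable.encode (ω n) ∈ c.eval n) →
        LearnsToPredict p ω := by
  intro N
  classical
  set S : Set (ℕ → Bool) :=
    {ω | ∃ c : Nat.Partrec.Code, Encodable.encode c ≤ N ∧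
        ∀ n : ℕ, Encodable.encode (ω n) ∈ c.eval n} with hSdef
  have hS : S.Finite := by
    choose! f hf1 hf2 using fun ω (h : ω ∈ S) => h
    have : Finite S := by
      apply Finite.of_injective (fun ω : S => (⟨Encodable.encode (f ω), by
        exact Nat.lt_succ_of_le (hf1 ω ω.2)⟩ : Fin (N+1)))
      intro ω₁ ω₂ h
      have hc : f ω₁ = f ω₂ := Encodable.encode_injective (by simpa using congrArg Fin.val h)
      apply Subtype.ext
      funext n
      have h1 := hf2 ω₁ ω₁.2 n
      have h2 := hf2 ω₂ ω₂.2 n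
      rw [hc] at h1
      exact Encodable.encode_injective (Part.mem_unique h1 h2)
    exact Set.toFinite S
  obtain ⟨p, hp, hlearn⟩ := finite_predictor S hS (fun ω hω => by
    obtain ⟨c, _, hc⟩ := hω; exact computable_of_code ω c hc)
  exact ⟨p, hp, fun ω hω => hlearn ω hω⟩
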